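/- (Triangle inequality for the monotone index) Let Π, Λ₀, Λ₁, Λ₂ be Lagrangian subspaces of a 2n-dimensional symplectic space, with the index Ind_Π(Λ,Λ') defined (when Λ, Λ', Π are mutually transversal) as ind⁻ q̃, where q̃(λ) = σ(λ₁,λ₀) for λ ∈ Π decomposed as λ = λ₀ + λ₁, λ₀ ∈ Λ, λ₁ ∈ Λ'. Then Ind_Π(Λ₀,Λ₂) ≤ Ind_Π(Λ₀,Λ₁) + Ind_Π(Λ₁,Λ₂). -/

import Mathlib

open Module

noncomputable def negIdx {E : Type*} [AddCommGroup E] [Module ℝ E]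
    (f : E → ℝ) : ℕ :=
  sSup {k | ∃ V : Submodule ℝ E, finrank ℝ V = k ∧ ∀ v ∈ V, v ≠ 0 → f v < 0}

def skewComplement {W : Type*} [AddCommGroup W] [Module ℝ W]
    (σ : W →ₗ[ℝ] W →ₗ[ℝ] ℝ) (Γ : Submodule ℝ W) : Submodule ℝ W where
  carrier := {x | ∀ y ∈ Γ, σ x y = 0}
  add_mem' := by
    intro a b ha hb y hy
    simp [map_add, ha y hy, hb y hy]
  zero_mem' := by
    intro y hy
    simp
  smul_mem' := by
    intro c a ha y hy
    simp [ha y hy]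

/-- `Ind_Pi₀(Λ, Λ')`: the Morse index of the quadratic form
`q̃(λ) = σ(λ₁, λ₀)` on `Pi₀`, where `λ = λ₀ + λ₁`, `λ₀ ∈ Λ`, `λ₁ ∈ Λ'`. -/
noncomputable def indPi {W : Type*} [AddCommGroup W] [Module ℝ W]
    (σ : W →ₗ[ℝ] W →ₗ[ℝ] ℝ) (Pi₀ Λ Λ' : Submodule ℝ W)
    (h : IsCompl Λ Λ') : ℕ :=
  negIdx (fun x : ↥Pi₀ =>
    σ ((x : W) - (Λ.linearProjOfIsCompl Λ' h (x : W) : W))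
      (Λ.linearProjOfIsCompl Λ' h (x : W) : W))


namespace NegIdxAux

variable {E F : Type*} [AddCommGroup E] [Module ℝ E] [AddCommGroup F] [Module ℝ F]

lemma set_nonempty (f : E → ℝ) :
    {k | ∃ V : Submodule ℝ E, finrank ℝ V = k ∧ ∀ v ∈ V, v ≠ 0 → f v < 0}.Nonempty := by
  refine ⟨0, ⊥, finrank_bot ℝ E, ?_⟩
  intro v hv hne
  exact absurd ((Submodule.mem_bot ℝ).mp hv) hne

lemma set_bdd [FiniteDimensional ℝ E] (f : E → ℝ) :
    BddAbove {k | ∃ V : Submodule ℝ E, finrank ℝ V = k ∧ ∀ v ∈ V, v ≠ 0 → f v < 0} := by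
  refine ⟨finrank ℝ E, ?_⟩
  rintro k ⟨V, rfl, -⟩
  exact V.finrank_le

lemma le_negIdx [FiniteDimensional ℝ E] (f : E → ℝ) (V : Submodule ℝ E)
    (h : ∀ v ∈ V, v ≠ 0 → f v < 0) : finrank ℝ V ≤ negIdx f :=
  le_csSup (set_bdd f) ⟨V, rfl, h⟩

lemma negIdx_le (f : E → ℝ) (m : ℕ)
    (h : ∀ V : Submodule ℝ E, (∀ v ∈ V, v ≠ 0 → f v < 0) → finrank ℝ V ≤ m) :
    negIdx f ≤ m := by
  refine csSup_le (set_nonempty f) ?_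
  rintro k ⟨V, rfl, hV⟩
  exact h V hV

lemma exists_negIdx [FiniteDimensional ℝ E] (f : E → ℝ) :
    ∃ V : Submodule ℝ E, finrank ℝ V = negIdx f ∧ ∀ v ∈ V, v ≠ 0 → f v < 0 :=
  Nat.sSup_mem (set_nonempty f) (set_bdd f)

lemma negIdx_comp_le [FiniteDimensional ℝ E] (f : E → ℝ) (φ : F →ₗ[ℝ] E)
    (hφ : Function.Injective φ) :
    negIdx (fun x => f (φ x)) ≤ negIdx f := by
  refine negIdx_le _ _ (fun V hV => ?_)
  rw [(Submodule.equivMapOfInjective φ hφ V).finrank_eq]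
  refine le_negIdx f (V.map φ) ?_
  intro v hv hne
  obtain ⟨w, hw, rfl⟩ := Submodule.mem_map.mp hv
  exact hV w hw (fun h => hne (by rw [h, map_zero]))

lemma negIdx_comp_equiv [FiniteDimensional ℝ E] [FiniteDimensional ℝ F]
    (f : E → ℝ) (e : F ≃ₗ[ℝ] E) :
    negIdx (fun x => f (e x)) = negIdx f := by
  refine le_antisymm (negIdx_comp_le f e.toLinearMap e.injective) ?_
  have h := negIdx_comp_le (fun x => f (e x)) e.symm.toLinearMap e.symm.injective
  simpa using h

lemma negIdx_le_of_nonneg [FiniteDimensional ℝ E] (f : E → ℝ) (Vp : Submodule ℝ E)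
    (h : ∀ x ∈ Vp, 0 ≤ f x) : negIdx f + finrank ℝ Vp ≤ finrank ℝ E := by
  have hb : finrank ℝ Vp ≤ finrank ℝ E := Vp.finrank_le
  have key : negIdx f ≤ finrank ℝ E - finrank ℝ Vp := by
    refine negIdx_le _ _ (fun V hV => ?_)
    have hd : V ⊓ Vp = ⊥ := by
      rw [eq_bot_iff]
      rintro x ⟨hx1, hx2⟩
      by_contra hne
      have h1 := hV x hx1 (by simpa using hne)
      have h2 := h x hx2
      linarith
    have := Submodule.finrank_sup_add_finrank_inf_eq V Vp
    rw [hd, finrank_bot] at this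
    have hle : finrank ℝ ↥(V ⊔ Vp) ≤ finrank ℝ E := (V ⊔ Vp).finrank_le
    omega
  omega

end NegIdxAux

namespace NegIdxAux
set_option linter.unusedSectionVars false

variable {E : Type*} [AddCommGroup E] [Module ℝ E] [FiniteDimensional ℝ E]

lemma bilin_expand (B : E →ₗ[ℝ] E →ₗ[ℝ] ℝ) (n : ℕ) (v : Basis (Fin n) ℝ E)
    (hv : ∀ i j, i ≠ j → B (v i) (v j) = 0) (x : E) :
    B x x = ∑ i, (v.repr x i) * (v.repr x i) * B (v i) (v i) := by
  conv_lhs => rw [← v.sum_repr x]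
  simp only [map_sum, LinearMap.sum_apply, map_smul, LinearMap.smul_apply, smul_eq_mul]
  refine Finset.sum_congr rfl (fun i _ => ?_)
  rw [Finset.sum_eq_single i (fun j _ hj => by rw [hv j i hj]; ring)
    (fun h => absurd (Finset.mem_univ i) h)]
  ring

lemma bilin_expand_one (B : E →ₗ[ℝ] E →ₗ[ℝ] ℝ) (n : ℕ) (v : Basis (Fin n) ℝ E)
    (hv : ∀ i j, i ≠ j → B (v i) (v j) = 0) (i : Fin n) (y : E) :
    B (v i) y = (v.repr y i) * B (v i) (v i) := by
  conv_lhs => rw [← v.sum_repr y]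
  simp only [map_sum, map_smul, smul_eq_mul]
  rw [Finset.sum_eq_single i (fun j _ hj => by rw [hv i j (Ne.symm hj)]; ring)
    (fun h => absurd (Finset.mem_univ i) h)]

lemma quad_split (B : E →ₗ[ℝ] E →ₗ[ℝ] ℝ) (hsymm : ∀ x y, B x y = B y x) :
    ∃ Vp Vn : Submodule ℝ E,
      (∀ x ∈ Vp, 0 ≤ B x x) ∧ (∀ x ∈ Vn, x ≠ 0 → B x x < 0) ∧
      ((∀ x : E, (∀ y, B x y = 0) → x = 0) → ∀ x ∈ Vp, x ≠ 0 → 0 < B x x) ∧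
      finrank ℝ Vp + finrank ℝ Vn = finrank ℝ E := by
  classical
  have hBsymm : B.IsSymm := ⟨fun x y => hsymm x y⟩
  obtain ⟨v, hv⟩ := LinearMap.BilinForm.exists_orthogonal_basis hBsymm
  have hortho : ∀ i j, i ≠ j → B (v i) (v j) = 0 := fun i j hij => hv hij
  set S : Finset (Fin (finrank ℝ E)) :=
    Finset.univ.filter (fun i => 0 ≤ B (v i) (v i)) with hS
  have hrepr_ne : ∀ x : E, x ≠ 0 → ∃ i, v.repr x i ≠ 0 := by
    intro x hne
    by_contra hall
    push_neg at hall
    refine hne ?_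
    have : v.repr x = 0 := Finsupp.ext (fun i => hall i)
    simpa using congrArg v.repr.symm this
  refine ⟨Submodule.span ℝ (v '' ↑S), Submodule.span ℝ (v '' ↑Sᶜ), ?_, ?_, ?_, ?_⟩
  · intro x hx
    have hsupp : ∀ i, i ∉ S → v.repr x i = 0 := by
      intro i hi
      by_contra hne
      exact hi ((Basis.mem_span_image v).mp hx (Finsupp.mem_support_iff.mpr hne))
    rw [bilin_expand B _ v hortho x]
    refine Finset.sum_nonneg (fun i _ => ?_)
    by_cases hi : i ∈ S
    · exact mul_nonneg (mul_self_nonneg _) (Finset.mem_filter.mp hi).2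
    · rw [hsupp i hi]; ring_nf; simp
  · intro x hx hne
    have hsupp : ∀ i, i ∈ S → v.repr x i = 0 := by
      intro i hi
      by_contra hne'
      have h1 : i ∈ (↑Sᶜ : Set (Fin (finrank ℝ E))) :=
        (Basis.mem_span_image v).mp hx (Finsupp.mem_support_iff.mpr hne')
      simp only [Finset.coe_compl, Set.mem_compl_iff, Finset.mem_coe] at h1
      exact h1 hi
    obtain ⟨i0, hi0⟩ := hrepr_ne x hne
    have hi0S : i0 ∉ S := fun h => hi0 (hsupp i0 h)
    have hdneg : B (v i0) (v i0) < 0 := by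
      by_contra h
      exact hi0S (Finset.mem_filter.mpr ⟨Finset.mem_univ _, le_of_not_gt h⟩)
    rw [bilin_expand B _ v hortho x]
    have hlt : ∑ i, (v.repr x i) * (v.repr x i) * B (v i) (v i)
        < ∑ _i : Fin (finrank ℝ E), (0:ℝ) := by
      refine Finset.sum_lt_sum (fun i _ => ?_) ⟨i0, Finset.mem_univ _, ?_⟩
      · by_cases hi : i ∈ S
        · rw [hsupp i hi]; simp
        · have h1 : B (v i) (v i) < 0 := by
            by_contra h
            exact hi (Finset.mem_filter.mpr ⟨Finset.mem_univ _, le_of_not_gt h⟩)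
          nlinarith [mul_self_nonneg (v.repr x i)]
      · have h2 : (0:ℝ) < v.repr x i0 * v.repr x i0 := mul_self_pos.mpr hi0
        nlinarith
    simpa using hlt
  · intro hsep x hx hne
    have hsupp : ∀ i, i ∉ S → v.repr x i = 0 := by
      intro i hi
      by_contra hne'
      exact hi ((Basis.mem_span_image v).mp hx (Finsupp.mem_support_iff.mpr hne'))
    have hdpos : ∀ i ∈ S, 0 < B (v i) (v i) := by
      intro i hi
      have hnn : 0 ≤ B (v i) (v i) := (Finset.mem_filter.mp hi).2
      rcases lt_or_eq_of_le hnn with h | h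
      · exact h
      · exfalso
        refine v.ne_zero i (hsep (v i) (fun y => ?_))
        rw [bilin_expand_one B _ v hortho i y, ← h]; ring
    obtain ⟨i0, hi0⟩ := hrepr_ne x hne
    have hi0S : i0 ∈ S := by
      by_contra h; exact hi0 (hsupp i0 h)
    rw [bilin_expand B _ v hortho x]
    have hlt : ∑ _i : Fin (finrank ℝ E), (0:ℝ)
        < ∑ i, (v.repr x i) * (v.repr x i) * B (v i) (v i) := by
      refine Finset.sum_lt_sum (fun i _ => ?_) ⟨i0, Finset.mem_univ _, ?_⟩
      · by_cases hi : i ∈ S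
        · nlinarith [mul_self_nonneg (v.repr x i), hdpos i hi]
        · rw [hsupp i hi]; simp
      · have h2 : (0:ℝ) < v.repr x i0 * v.repr x i0 := mul_self_pos.mpr hi0
        nlinarith [hdpos i0 hi0S]
    simpa using hlt
  · have hcard : ∀ T : Finset (Fin (finrank ℝ E)),
        finrank ℝ ↥(Submodule.span ℝ (v '' ↑T)) = T.card := by
      intro T
      have hli : LinearIndependent ℝ (fun i : ↥(↑T : Set (Fin (finrank ℝ E))) => v i) :=
        v.linearIndependent.comp _ Subtype.val_injective
      have hrange : Set.range (fun i : ↥(↑T : Set (Fin (finrank ℝ E))) => v i)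
          = v '' ↑T := by rw [← Set.image_eq_range]
      rw [← hrange, finrank_span_eq_card hli]
      simp
    rw [hcard S, hcard Sᶜ, Finset.card_compl]
    have hcardle : S.card ≤ Fintype.card (Fin (finrank ℝ E)) := Finset.card_le_univ S
    simp only [Fintype.card_fin] at *
    omega

end NegIdxAux
namespace NegIdxAux
set_option linter.unusedSectionVars false

variable {E F : Type*} [AddCommGroup E] [Module ℝ E] [AddCommGroup F] [Module ℝ F]

lemma prodmap_inj (V : Submodule ℝ E) (W : Submodule ℝ F) :
    Function.Injective (V.subtype.prodMap W.subtype) := by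
  intro a b h
  simp only [LinearMap.prodMap_apply, Submodule.coe_subtype, Prod.mk.injEq] at h
  exact Prod.ext (Subtype.val_injective h.1) (Subtype.val_injective h.2)

lemma negIdx_prod [FiniteDimensional ℝ E] [FiniteDimensional ℝ F]
    (B : E →ₗ[ℝ] E →ₗ[ℝ] ℝ) (C : F →ₗ[ℝ] F →ₗ[ℝ] ℝ)
    (hB : ∀ x y, B x y = B y x) (hC : ∀ x y, C x y = C y x) :
    negIdx (fun p : E × F => B p.1 p.1 + C p.2 p.2)
      = negIdx (fun x => B x x) + negIdx (fun y => C y y) := by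
  apply le_antisymm
  · obtain ⟨Vp, Vn, hVp, hVn, -, hVrank⟩ := quad_split B hB
    obtain ⟨Wp, Wn, hWp, hWn, -, hWrank⟩ := quad_split C hC
    set φ := Vp.subtype.prodMap Wp.subtype with hφ
    have hrank : finrank ℝ (LinearMap.range φ) = finrank ℝ Vp + finrank ℝ Wp := by
      rw [LinearMap.finrank_range_of_inj (prodmap_inj Vp Wp), Module.finrank_prod]
    have hnn : ∀ x ∈ LinearMap.range φ, 0 ≤ B x.1 x.1 + C x.2 x.2 := by
      rintro x ⟨⟨a, b⟩, rfl⟩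
      simp only [hφ, LinearMap.prodMap_apply, Submodule.coe_subtype]
      exact add_nonneg (hVp a a.2) (hWp b b.2)
    have hmain := negIdx_le_of_nonneg (fun p : E × F => B p.1 p.1 + C p.2 p.2)
      (LinearMap.range φ) hnn
    rw [hrank, Module.finrank_prod] at hmain
    have h1 : finrank ℝ Vn ≤ negIdx (fun x => B x x) := le_negIdx _ Vn hVn
    have h2 : finrank ℝ Wn ≤ negIdx (fun y => C y y) := le_negIdx _ Wn hWn
    omega
  · obtain ⟨V, hVr, hV⟩ := exists_negIdx (fun x => B x x)
    obtain ⟨W, hWr, hW⟩ := exists_negIdx (fun y => C y y)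
    set φ := V.subtype.prodMap W.subtype with hφ
    have hrank : finrank ℝ (LinearMap.range φ) = finrank ℝ V + finrank ℝ W := by
      rw [LinearMap.finrank_range_of_inj (prodmap_inj V W), Module.finrank_prod]
    rw [← hVr, ← hWr, ← hrank]
    refine le_negIdx _ (LinearMap.range φ) ?_
    rintro x ⟨⟨a, b⟩, rfl⟩ hne
    simp only [hφ, LinearMap.prodMap_apply, Submodule.coe_subtype] at hne ⊢
    have hB0 : B (a : E) (a : E) ≤ 0 := by
      by_cases ha : (a : E) = 0
      · rw [ha]; simp
      · exact le_of_lt (hV a a.2 ha)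
    have hC0 : C (b : F) (b : F) ≤ 0 := by
      by_cases hb : (b : F) = 0
      · rw [hb]; simp
      · exact le_of_lt (hW b b.2 hb)
    have hor : (a : E) ≠ 0 ∨ (b : F) ≠ 0 := by
      by_contra h
      push_neg at h
      exact hne (by rw [h.1, h.2]; simp)
    rcases hor with h | h
    · have := hV a a.2 h; linarith
    · have := hW b b.2 h; linarith

def shearSnd (u : E →ₗ[ℝ] F) : (E × F) ≃ₗ[ℝ] E × F :=
  LinearEquiv.ofLinear
    ((LinearMap.fst ℝ E F).prod ((LinearMap.snd ℝ E F) - u.comp (LinearMap.fst ℝ E F)))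
    ((LinearMap.fst ℝ E F).prod ((LinearMap.snd ℝ E F) + u.comp (LinearMap.fst ℝ E F)))
    (by ext p <;> simp)
    (by ext p <;> simp)

@[simp] lemma shearSnd_apply (u : E →ₗ[ℝ] F) (p : E × F) :
    shearSnd u p = (p.1, p.2 - u p.1) := rfl

def shearFst (j : F →ₗ[ℝ] E) : (E × F) ≃ₗ[ℝ] E × F :=
  LinearEquiv.ofLinear
    (((LinearMap.fst ℝ E F) - j.comp (LinearMap.snd ℝ E F)).prod (LinearMap.snd ℝ E F))
    (((LinearMap.fst ℝ E F) + j.comp (LinearMap.snd ℝ E F)).prod (LinearMap.snd ℝ E F))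
    (by ext p <;> simp)
    (by ext p <;> simp)

@[simp] lemma shearFst_apply (j : F →ₗ[ℝ] E) (p : E × F) :
    shearFst j p = (p.1 - j p.2, p.2) := rfl

end NegIdxAux
namespace NegIdxAux
set_option linter.unusedSectionVars false

section Core
variable {W : Type*} [AddCommGroup W] [Module ℝ W]

lemma projc_mem (p q : Submodule ℝ W) (h : IsCompl p q) (x : W) :
    (p.subtype ∘ₗ p.linearProjOfIsCompl q h) x ∈ p := (p.linearProjOfIsCompl q h x).2

lemma projc_left (p q : Submodule ℝ W) (h : IsCompl p q) {x : W} (hx : x ∈ p) :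
    (p.subtype ∘ₗ p.linearProjOfIsCompl q h) x = x := by
  have h1 := Submodule.linearProjOfIsCompl_apply_left h ⟨x, hx⟩
  exact congrArg Subtype.val h1

lemma projc_right (p q : Submodule ℝ W) (h : IsCompl p q) {x : W} (hx : x ∈ q) :
    (p.subtype ∘ₗ p.linearProjOfIsCompl q h) x = 0 := by
  have h1 := Submodule.projectionOnto_apply_of_mem_right h hx
  exact congrArg Subtype.val h1

lemma projc_sub_mem (p q : Submodule ℝ W) (h : IsCompl p q) (x : W) :
    x - (p.subtype ∘ₗ p.linearProjOfIsCompl q h) x ∈ q := by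
  have h0 : p.linearProjOfIsCompl q h (x - (p.subtype ∘ₗ p.linearProjOfIsCompl q h) x) = 0 := by
    rw [map_sub]; exact sub_eq_zero.mpr (Submodule.projectionOnto_apply_left h _).symm
  exact (Submodule.linearProjOfIsCompl_apply_eq_zero_iff h).mp h0

lemma sym_proj (σ : W →ₗ[ℝ] W →ₗ[ℝ] ℝ) (skew : ∀ x y : W, σ x y = -σ y x)
    {p q : Submodule ℝ W}
    (isop : ∀ x ∈ p, ∀ y ∈ p, σ x y = 0) (isoq : ∀ x ∈ q, ∀ y ∈ q, σ x y = 0)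
    (Pc : W →ₗ[ℝ] W) (hmem : ∀ w, Pc w ∈ p) (hsub : ∀ w, w - Pc w ∈ q)
    (x y : W) (hxy : σ x y = 0) : σ x (Pc y) = σ y (Pc x) := by
  have h1 : σ (Pc x) (Pc y) = 0 := isop _ (hmem x) _ (hmem y)
  have h2 : σ (x - Pc x) (y - Pc y) = 0 := isoq _ (hsub x) _ (hsub y)
  have hexp : σ (x - Pc x) (y - Pc y)
      = σ x y - σ x (Pc y) - σ (Pc x) y + σ (Pc x) (Pc y) := by
    simp only [map_sub, LinearMap.sub_apply]; ring
  rw [hexp] at h2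
  have h3 := skew (Pc x) y
  linarith

lemma core1 (σ : W →ₗ[ℝ] W →ₗ[ℝ] ℝ) (hskew : ∀ x : W, σ x x = 0)
    (skew : ∀ x y : W, σ x y = -σ y x)
    {Λ₀ Λ₁ Λ₂ : Submodule ℝ W}
    (iso0 : ∀ x ∈ Λ₀, ∀ y ∈ Λ₀, σ x y = 0) (iso1 : ∀ x ∈ Λ₁, ∀ y ∈ Λ₁, σ x y = 0)
    (iso2 : ∀ x ∈ Λ₂, ∀ y ∈ Λ₂, σ x y = 0)
    (Pc : W →ₗ[ℝ] W) (hmem : ∀ w, Pc w ∈ Λ₀) (hsub : ∀ w, w - Pc w ∈ Λ₂)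
    (a u l : W) (ha : a ∈ Λ₀) (hu : u ∈ Λ₁) (hl : l ∈ Λ₁) (hPa : Pc a = a) :
    σ (a + u) (Pc (a + u)) + 2 * σ (a + u) (Pc (l - u)) + σ (l - u) (Pc (l - u))
      = σ (a + u) a + σ l (Pc l) := by
  have s1 : σ a a = 0 := hskew a
  have s2 : σ a (Pc u) = 0 := iso0 _ ha _ (hmem u)
  have s3 : σ a (Pc l) = 0 := iso0 _ ha _ (hmem l)
  have s4 : σ l (Pc u) = σ u (Pc l) :=
    sym_proj σ skew iso0 iso2 Pc hmem hsub l u (iso1 _ hl _ hu)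
  simp only [map_add, map_sub, LinearMap.add_apply, LinearMap.sub_apply, hPa]
  linarith

lemma core2 (σ : W →ₗ[ℝ] W →ₗ[ℝ] ℝ) (skew : ∀ x y : W, σ x y = -σ y x)
    {P' Λ₀ Λ₂ : Submodule ℝ W}
    (isoP : ∀ x ∈ P', ∀ y ∈ P', σ x y = 0)
    (iso0 : ∀ x ∈ Λ₀, ∀ y ∈ Λ₀, σ x y = 0) (iso2 : ∀ x ∈ Λ₂, ∀ y ∈ Λ₂, σ x y = 0)
    (Pc : W →ₗ[ℝ] W) (hmem : ∀ w, Pc w ∈ Λ₀) (hsub : ∀ w, w - Pc w ∈ Λ₂)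
    (hkill : ∀ w ∈ Λ₂, Pc w = 0)
    (x g l : W) (hx : x ∈ P') (hg : g ∈ P') (hlg : l - g ∈ Λ₂) :
    σ (x - g) (Pc (x - g)) + 2 * σ (x - g) (Pc l) + σ l (Pc l)
      = σ x (Pc x) + (σ l (Pc l) - σ g (Pc g)) := by
  have h1 : Pc (l - g) = 0 := hkill _ hlg
  rw [map_sub] at h1
  have h2 : Pc l = Pc g := by
    have := sub_eq_zero.mp h1; exact this
  have h3 : σ x (Pc g) = σ g (Pc x) :=
    sym_proj σ skew iso0 iso2 Pc hmem hsub x g (isoP _ hx _ hg)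
  simp only [map_sub, LinearMap.sub_apply, h2]
  linarith

lemma core3 (σ : W →ₗ[ℝ] W →ₗ[ℝ] ℝ) (hskew : ∀ x : W, σ x x = 0)
    {Λ₂ : Submodule ℝ W} (iso2 : ∀ x ∈ Λ₂, ∀ y ∈ Λ₂, σ x y = 0)
    (Pc : W →ₗ[ℝ] W) (hsub : ∀ w, w - Pc w ∈ Λ₂) (hkill : ∀ w ∈ Λ₂, Pc w = 0)
    (l c : W) (hc : c ∈ Λ₂) :
    σ l (Pc l) - σ (l - c) (Pc (l - c)) = -(σ (l - c) l) := by
  have h1 : σ c (l - Pc l) = 0 := iso2 _ hc _ (hsub l)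
  have h2 : Pc (l - c) = Pc l := by rw [map_sub, hkill _ hc, sub_zero]
  have h3 : σ l l = 0 := hskew l
  rw [h2]
  simp only [map_sub, LinearMap.sub_apply] at h1 ⊢
  linarith

end Core
end NegIdxAux

set_option maxHeartbeats 2000000 in
open NegIdxAux in
/-- triangle inequality:
`Ind_Pi₀(Λ₀,Λ₂) ≤ Ind_Pi₀(Λ₀,Λ₁) + Ind_Pi₀(Λ₁,Λ₂)`. -/
theorem indPi_triangle
    {W : Type*} [AddCommGroup W] [Module ℝ W] [FiniteDimensional ℝ W]
    (σ : W →ₗ[ℝ] W →ₗ[ℝ] ℝ)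
    (hskew : ∀ x : W, σ x x = 0)
    (hnondeg : ∀ x : W, (∀ y : W, σ x y = 0) → x = 0)
    (Pi₀ Λ₀ Λ₁ Λ₂ : Submodule ℝ W)
    (hP : Pi₀ = skewComplement σ Pi₀)
    (hL₀ : Λ₀ = skewComplement σ Λ₀)
    (hL₁ : Λ₁ = skewComplement σ Λ₁)
    (hL₂ : Λ₂ = skewComplement σ Λ₂)
    (h01 : IsCompl Λ₀ Λ₁) (h02 : IsCompl Λ₀ Λ₂) (h12 : IsCompl Λ₁ Λ₂)
    (hP0 : IsCompl Pi₀ Λ₀) (hP1 : IsCompl Pi₀ Λ₁) (hP2 : IsCompl Pi₀ Λ₂) :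
    indPi σ Pi₀ Λ₀ Λ₂ h02 ≤ indPi σ Pi₀ Λ₀ Λ₁ h01 + indPi σ Pi₀ Λ₁ Λ₂ h12 := by
  classical
  have isoP : ∀ x ∈ Pi₀, ∀ y ∈ Pi₀, σ x y = 0 := by
    intro x hx y hy; exact (hP ▸ hx : x ∈ skewComplement σ Pi₀) y hy
  have iso0 : ∀ x ∈ Λ₀, ∀ y ∈ Λ₀, σ x y = 0 := by
    intro x hx y hy; exact (hL₀ ▸ hx : x ∈ skewComplement σ Λ₀) y hy
  have iso1 : ∀ x ∈ Λ₁, ∀ y ∈ Λ₁, σ x y = 0 := by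
    intro x hx y hy; exact (hL₁ ▸ hx : x ∈ skewComplement σ Λ₁) y hy
  have iso2 : ∀ x ∈ Λ₂, ∀ y ∈ Λ₂, σ x y = 0 := by
    intro x hx y hy; exact (hL₂ ▸ hx : x ∈ skewComplement σ Λ₂) y hy
  have skew : ∀ x y : W, σ x y = -σ y x := by
    intro x y
    have h := hskew (x + y)
    simp only [map_add, LinearMap.add_apply, hskew x, hskew y] at h
    linarith
  -- projections, coerced to maps W →ₗ W
  set Pc : W →ₗ[ℝ] W := Λ₀.subtype ∘ₗ Λ₀.linearProjOfIsCompl Λ₂ h02 with hPc_def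
  set P01c : W →ₗ[ℝ] W := Λ₀.subtype ∘ₗ Λ₀.linearProjOfIsCompl Λ₁ h01 with hP01c_def
  set P12c : W →ₗ[ℝ] W := Λ₁.subtype ∘ₗ Λ₁.linearProjOfIsCompl Λ₂ h12 with hP12c_def
  have hPc_mem : ∀ w : W, Pc w ∈ Λ₀ := projc_mem Λ₀ Λ₂ h02
  have hPc_sub : ∀ w : W, w - Pc w ∈ Λ₂ := projc_sub_mem Λ₀ Λ₂ h02
  have hPc_kill : ∀ w ∈ Λ₂, Pc w = 0 := fun w hw => projc_right Λ₀ Λ₂ h02 hw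
  have hP01c_mem : ∀ w : W, P01c w ∈ Λ₀ := projc_mem Λ₀ Λ₁ h01
  have hP01c_sub : ∀ w : W, w - P01c w ∈ Λ₁ := projc_sub_mem Λ₀ Λ₁ h01
  have hP12c_mem : ∀ w : W, P12c w ∈ Λ₁ := projc_mem Λ₁ Λ₂ h12
  have hP12c_sub : ∀ w : W, w - P12c w ∈ Λ₂ := projc_sub_mem Λ₁ Λ₂ h12
  -- shear ingredients
  set u1 : ↥Pi₀ →ₗ[ℝ] ↥Λ₁ := (Λ₁.linearProjOfIsCompl Λ₀ h01.symm) ∘ₗ Pi₀.subtype with hu1_def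
  set jm : ↥Λ₁ →ₗ[ℝ] ↥Pi₀ := (Pi₀.linearProjOfIsCompl Λ₂ hP2) ∘ₗ Λ₁.subtype with hjm_def
  have hu1 : ∀ x : ↥Pi₀, ((u1 x : W)) = (x : W) - P01c (x : W) := by
    intro x
    have h := Submodule.projection_add_projection_eq_self h01 (x : W)
    rw [hu1_def, hP01c_def]
    simp only [LinearMap.comp_apply, Submodule.coe_subtype]
    rw [eq_sub_iff_add_eq, add_comm]
    exact h
  have hjm_sub : ∀ l : ↥Λ₁, (l : W) - (jm l : W) ∈ Λ₂ := by
    intro l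
    have h := projc_sub_mem Pi₀ Λ₂ hP2 (l : W)
    simpa [hjm_def] using h
  have hP12c_jm : ∀ l : ↥Λ₁, P12c ((jm l : W)) = (l : W) := by
    intro l
    have hdec : ((jm l : W)) = (l : W) - ((l : W) - (jm l : W)) := by abel
    rw [hdec, map_sub, projc_left Λ₁ Λ₂ h12 l.2, projc_right Λ₁ Λ₂ h12 (hjm_sub l), sub_zero]
  -- the bilinear forms
  set B02 : ↥Pi₀ →ₗ[ℝ] ↥Pi₀ →ₗ[ℝ] ℝ :=
    (σ ∘ₗ Pi₀.subtype).compl₂ (Pc ∘ₗ Pi₀.subtype) with hB02_def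
  set B01 : ↥Pi₀ →ₗ[ℝ] ↥Pi₀ →ₗ[ℝ] ℝ :=
    (σ ∘ₗ Pi₀.subtype).compl₂ (P01c ∘ₗ Pi₀.subtype) with hB01_def
  set B12 : ↥Pi₀ →ₗ[ℝ] ↥Pi₀ →ₗ[ℝ] ℝ :=
    (σ ∘ₗ Pi₀.subtype).compl₂ (P12c ∘ₗ Pi₀.subtype) with hB12_def
  set Bt : ↥Λ₁ →ₗ[ℝ] ↥Λ₁ →ₗ[ℝ] ℝ :=
    (σ ∘ₗ Λ₁.subtype).compl₂ (Pc ∘ₗ Λ₁.subtype) with hBt_def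
  set Bm : ↥Λ₁ →ₗ[ℝ] ↥Λ₁ →ₗ[ℝ] ℝ :=
    Bt - ((σ ∘ₗ (Pi₀.subtype ∘ₗ jm)).compl₂ ((Pc ∘ₗ Pi₀.subtype) ∘ₗ jm)) with hBm_def
  have hB02app : ∀ x y : ↥Pi₀, B02 x y = σ (x : W) (Pc (y : W)) := by
    intro x y; rw [hB02_def]; simp [LinearMap.compl₂_apply]
  have hB01app : ∀ x y : ↥Pi₀, B01 x y = σ (x : W) (P01c (y : W)) := by
    intro x y; rw [hB01_def]; simp [LinearMap.compl₂_apply]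
  have hB12app : ∀ x y : ↥Pi₀, B12 x y = σ (x : W) (P12c (y : W)) := by
    intro x y; rw [hB12_def]; simp [LinearMap.compl₂_apply]
  have hBtapp : ∀ x y : ↥Λ₁, Bt x y = σ (x : W) (Pc (y : W)) := by
    intro x y; rw [hBt_def]; simp [LinearMap.compl₂_apply]
  have hBmapp : ∀ x y : ↥Λ₁,
      Bm x y = σ (x : W) (Pc (y : W)) - σ ((jm x : W)) (Pc ((jm y : W))) := by
    intro x y
    rw [hBm_def]
    simp [hBt_def, LinearMap.sub_apply, LinearMap.compl₂_apply]
  -- symmetry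
  have symB02 : ∀ x y : ↥Pi₀, B02 x y = B02 y x := by
    intro x y
    rw [hB02app, hB02app]
    exact sym_proj σ skew iso0 iso2 Pc hPc_mem hPc_sub _ _ (isoP _ x.2 _ y.2)
  have symB01 : ∀ x y : ↥Pi₀, B01 x y = B01 y x := by
    intro x y
    rw [hB01app, hB01app]
    exact sym_proj σ skew iso0 iso1 P01c hP01c_mem hP01c_sub _ _ (isoP _ x.2 _ y.2)
  have symB12 : ∀ x y : ↥Pi₀, B12 x y = B12 y x := by
    intro x y
    rw [hB12app, hB12app]
    exact sym_proj σ skew iso1 iso2 P12c hP12c_mem hP12c_sub _ _ (isoP _ x.2 _ y.2)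
  have symBt : ∀ x y : ↥Λ₁, Bt x y = Bt y x := by
    intro x y
    rw [hBtapp, hBtapp]
    exact sym_proj σ skew iso0 iso2 Pc hPc_mem hPc_sub _ _ (iso1 _ x.2 _ y.2)
  have symBm : ∀ x y : ↥Λ₁, Bm x y = Bm y x := by
    intro x y
    rw [hBmapp, hBmapp]
    have h1 : σ ((x : W)) (Pc (y : W)) = σ ((y : W)) (Pc (x : W)) :=
      sym_proj σ skew iso0 iso2 Pc hPc_mem hPc_sub _ _ (iso1 _ x.2 _ y.2)
    have h2 : σ ((jm x : W)) (Pc ((jm y : W))) = σ ((jm y : W)) (Pc ((jm x : W))) :=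
      sym_proj σ skew iso0 iso2 Pc hPc_mem hPc_sub _ _ (isoP _ (jm x).2 _ (jm y).2)
    rw [h1, h2]
  -- the master quadratic form on Pi₀ × Λ₁
  set Q : ↥Pi₀ × ↥Λ₁ → ℝ := fun p =>
    σ (p.1 : W) (Pc (p.1 : W)) + 2 * σ (p.1 : W) (Pc (p.2 : W))
      + σ (p.2 : W) (Pc (p.2 : W)) with hQ_def
  -- step 1: Q ∘ (snd-shear) = q01 ⊞ t
  have step1 : negIdx (fun p : ↥Pi₀ × ↥Λ₁ => B01 p.1 p.1 + Bt p.2 p.2) = negIdx Q := by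
    rw [← negIdx_comp_equiv Q (shearSnd u1)]
    congr 1
    funext p
    rw [shearSnd_apply]
    have hco : ((p.2 - u1 p.1 : ↥Λ₁) : W) = (p.2 : W) - ((p.1 : W) - P01c ((p.1 : W))) := by
      rw [Submodule.coe_sub, hu1]
    have key := core1 σ hskew skew iso0 iso1 iso2 Pc hPc_mem hPc_sub
      (P01c ((p.1 : W))) ((p.1 : W) - P01c ((p.1 : W))) ((p.2 : W))
      (hP01c_mem _) (hP01c_sub _) p.2.2 (projc_left Λ₀ Λ₂ h02 (hP01c_mem _))
    have hsimp : P01c ((p.1 : W)) + ((p.1 : W) - P01c ((p.1 : W))) = (p.1 : W) := by abel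
    rw [hsimp] at key
    rw [hQ_def]
    simp only [hco]
    rw [hB01app, hBtapp]
    linarith [key]
  -- step 2: Q ∘ (fst-shear) = q02 ⊞ m
  have step2 : negIdx (fun p : ↥Pi₀ × ↥Λ₁ => B02 p.1 p.1 + Bm p.2 p.2) = negIdx Q := by
    rw [← negIdx_comp_equiv Q (shearFst jm)]
    congr 1
    funext p
    rw [shearFst_apply]
    have hco : ((p.1 - jm p.2 : ↥Pi₀) : W) = (p.1 : W) - ((jm p.2 : W)) := by
      rw [Submodule.coe_sub]
    have key := core2 σ skew isoP iso0 iso2 Pc hPc_mem hPc_sub hPc_kill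
      ((p.1 : W)) ((jm p.2 : W)) ((p.2 : W)) p.1.2 (jm p.2).2 (hjm_sub p.2)
    rw [hQ_def]
    simp only [hco]
    rw [hB02app, hBmapp]
    linarith [key]
  -- step 3: split the product indices
  have step3 : negIdx (fun p : ↥Pi₀ × ↥Λ₁ => B01 p.1 p.1 + Bt p.2 p.2)
      = negIdx (fun x : ↥Pi₀ => B01 x x) + negIdx (fun l : ↥Λ₁ => Bt l l) :=
    negIdx_prod B01 Bt symB01 symBt
  have step4 : negIdx (fun p : ↥Pi₀ × ↥Λ₁ => B02 p.1 p.1 + Bm p.2 p.2)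
      = negIdx (fun x : ↥Pi₀ => B02 x x) + negIdx (fun l : ↥Λ₁ => Bm l l) :=
    negIdx_prod B02 Bm symB02 symBm
  -- the equivalence jm : Λ₁ ≃ Pi₀
  have hjm_inj : Function.Injective jm := by
    intro a b hab
    have h0 : jm (a - b) = 0 := by rw [map_sub, hab, sub_self]
    have h1 : ((a - b : ↥Λ₁) : W) ∈ Λ₂ := by
      rw [hjm_def] at h0
      exact (Submodule.linearProjOfIsCompl_apply_eq_zero_iff hP2).mp h0
    have h2 : ((a - b : ↥Λ₁) : W) = 0 :=
      Submodule.disjoint_def.mp h12.disjoint _ (a - b).2 h1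
    have h3 : a - b = 0 := by exact_mod_cast h2
    exact sub_eq_zero.mp h3
  have hdim : finrank ℝ ↥Λ₁ = finrank ℝ ↥Pi₀ := by
    have d1 := Submodule.finrank_add_eq_of_isCompl hP0
    have d2 := Submodule.finrank_add_eq_of_isCompl h01
    omega
  have hjm_surj : Function.Surjective jm :=
    (LinearMap.injective_iff_surjective_of_finrank_eq_finrank hdim).mp hjm_inj
  -- step 5: negIdx m = negIdx (-q12)
  have step5 : negIdx (fun l : ↥Λ₁ => Bm l l) = negIdx (fun x : ↥Pi₀ => -(B12 x x)) := by
    rw [← negIdx_comp_equiv (fun x : ↥Pi₀ => -(B12 x x))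
      (LinearEquiv.ofBijective jm ⟨hjm_inj, hjm_surj⟩)]
    congr 1
    funext l
    show Bm l l = -(B12 (jm l) (jm l))
    rw [hBmapp, hB12app]
    have key := core3 σ hskew iso2 Pc hPc_sub hPc_kill ((l : W))
      ((l : W) - ((jm l : W))) (hjm_sub l)
    have hsimp : (l : W) - ((l : W) - ((jm l : W))) = ((jm l : W)) := by abel
    rw [hsimp] at key
    rw [hP12c_jm l]
    linarith [key]
  -- step 6: t has index at most dim Λ₁
  have step6 : negIdx (fun l : ↥Λ₁ => Bt l l) ≤ finrank ℝ ↥Λ₁ :=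
    negIdx_le _ _ (fun V _ => V.finrank_le)
  -- step 7: q12 is nondegenerate, so index + coindex ≥ dim Pi₀
  have hsep : ∀ x : ↥Pi₀, (∀ y : ↥Pi₀, B12 x y = 0) → x = 0 := by
    intro x hx
    have h1 : ∀ y : ↥Pi₀, σ ((y : W)) (P12c ((x : W))) = 0 := by
      intro y
      have hs : σ ((x : W)) (P12c ((y : W))) = σ ((y : W)) (P12c ((x : W))) :=
        sym_proj σ skew iso1 iso2 P12c hP12c_mem hP12c_sub _ _ (isoP _ x.2 _ y.2)
      rw [← hs, ← hB12app]
      exact hx y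
    have h2 : ∀ w : W, σ w (P12c ((x : W))) = 0 := by
      intro w
      obtain ⟨up, vq, huv, -⟩ := Submodule.existsUnique_add_of_isCompl hP1 w
      rw [← huv, map_add, LinearMap.add_apply, h1 up,
        iso1 _ vq.2 _ (hP12c_mem _), add_zero]
    have h3 : P12c ((x : W)) = 0 := by
      refine hnondeg _ (fun y => ?_)
      rw [skew, h2 y, neg_zero]
    have h4 : (x : W) ∈ Λ₂ := by
      have := hP12c_sub ((x : W))
      rw [h3, sub_zero] at this
      exact this
    have h5 : (x : W) = 0 := Submodule.disjoint_def.mp hP2.disjoint _ x.2 h4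
    exact_mod_cast h5
  obtain ⟨Vp, Vn, hVp, hVn, hVpos, hVrank⟩ := quad_split B12 symB12
  have c2a : finrank ℝ Vn ≤ negIdx (fun x : ↥Pi₀ => B12 x x) := le_negIdx _ _ hVn
  have c2b : finrank ℝ Vp ≤ negIdx (fun x : ↥Pi₀ => -(B12 x x)) :=
    le_negIdx _ _ (fun v hv hne => by have := hVpos hsep v hv hne; linarith)
  -- step 8: identify the indPi's
  have hi02 : indPi σ Pi₀ Λ₀ Λ₂ h02 = negIdx (fun x : ↥Pi₀ => B02 x x) := by
    unfold indPi
    congr 1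
    funext x
    rw [hB02app]
    have hPeq : ((Λ₀.linearProjOfIsCompl Λ₂ h02 ((x : W))) : W) = Pc ((x : W)) := rfl
    rw [hPeq, map_sub, LinearMap.sub_apply, hskew]
    ring
  have hi01 : indPi σ Pi₀ Λ₀ Λ₁ h01 = negIdx (fun x : ↥Pi₀ => B01 x x) := by
    unfold indPi
    congr 1
    funext x
    rw [hB01app]
    have hPeq : ((Λ₀.linearProjOfIsCompl Λ₁ h01 ((x : W))) : W) = P01c ((x : W)) := rfl
    rw [hPeq, map_sub, LinearMap.sub_apply, hskew]
    ring
  have hi12 : indPi σ Pi₀ Λ₁ Λ₂ h12 = negIdx (fun x : ↥Pi₀ => B12 x x) := by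
    unfold indPi
    congr 1
    funext x
    rw [hB12app]
    have hPeq : ((Λ₁.linearProjOfIsCompl Λ₂ h12 ((x : W))) : W) = P12c ((x : W)) := rfl
    rw [hPeq, map_sub, LinearMap.sub_apply, hskew]
    ring
  -- final arithmetic
  rw [hi02, hi01, hi12]
  have main : negIdx (fun x : ↥Pi₀ => B02 x x) + negIdx (fun l : ↥Λ₁ => Bm l l)
      = negIdx (fun x : ↥Pi₀ => B01 x x) + negIdx (fun l : ↥Λ₁ => Bt l l) := by
    rw [← step3, ← step4, step1, step2]
  omega
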